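/- Let $L$ be a unimodular even lattice and $S \subset L$ a nondegenerate primitive sublattice with orthogonal complement $N = S^\perp$. Then the discriminant form of $N$ is anti-isometric to that of $S$: there is a group isomorphism $\varphi: S^\sharp/S \to N^\sharp/N$ with $q_N(\varphi(\xi)) = -q_S(\xi)$ for all $\xi$. -/

import Mathlib

/-- For an element of the `ℚ`-span of a `ℤ`-submodule, some nonzero integer
multiple lies in the submodule. -/
private lemma aux_denom {V : Type*} [AddCommGroup V] [Module ℚ V]
    (W : Submodule ℤ V) {v : V} (hv : v ∈ Submodule.span ℚ (W : Set V)) :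
    ∃ m : ℤ, m ≠ 0 ∧ (m : ℚ) • v ∈ W := by
  induction hv using Submodule.span_induction with
  | mem x hx => exact ⟨1, one_ne_zero, by simpa using hx⟩
  | zero => exact ⟨1, one_ne_zero, by simp⟩
  | add x y hx hy ihx ihy =>
    obtain ⟨m, hm, hmx⟩ := ihx
    obtain ⟨k, hk, hky⟩ := ihy
    refine ⟨m * k, mul_ne_zero hm hk, ?_⟩
    have h1 : ((m * k : ℤ) : ℚ) • (x + y)
        = (k : ℤ) • ((m : ℚ) • x) + (m : ℤ) • ((k : ℚ) • y) := by
      rw [← Int.cast_smul_eq_zsmul ℚ k ((m : ℚ) • x),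
        ← Int.cast_smul_eq_zsmul ℚ m ((k : ℚ) • y)]
      push_cast
      module
    rw [h1]
    exact W.add_mem (W.smul_mem k hmx) (W.smul_mem m hky)
  | smul a x hx ih =>
    obtain ⟨m, hm, hmx⟩ := ih
    have hden : ((a.den : ℤ) : ℚ) ≠ 0 := by
      exact_mod_cast (Nat.cast_ne_zero (R := ℚ)).mpr a.den_nz
    refine ⟨(a.den : ℤ) * m, mul_ne_zero (by exact_mod_cast a.den_nz) hm, ?_⟩
    have hda : (a.num : ℚ) = a * (a.den : ℚ) :=
      (div_eq_iff hden).mp (Rat.num_div_den a)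
    have key : (((a.den : ℤ) * m : ℤ) : ℚ) • (a • x) = (a.num : ℤ) • ((m : ℚ) • x) := by
      rw [← Int.cast_smul_eq_zsmul ℚ a.num ((m : ℚ) • x), smul_smul, smul_smul]
      congr 1
      push_cast
      rw [hda]
      ring
    rw [key]
    exact W.smul_mem _ hmx

set_option maxHeartbeats 1000000 in
/-- Let `L` be a unimodular even lattice (a full integral even lattice in a
finite-dimensional `ℚ`-vector space, equal to its own dual) and `S ⊆ L` a
nondegenerate primitive sublattice with orthogonal complement `N = S^⊥`.
Then the discriminant form of `N` is anti-isometric to that of `S`: there is a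
group isomorphism `φ : S♯/S → N♯/N` with `q_N(φ(ξ)) = -q_S(ξ)` for all `ξ`. -/
theorem discriminant_anti_isometry_of_primitive_sublattice
    (V : Type*) [AddCommGroup V] [Module ℚ V] [FiniteDimensional ℚ V]
    (b : V →ₗ[ℚ] V →ₗ[ℚ] ℚ) (hsymm : ∀ x y, b x y = b y x)
    (hnd : ∀ x : V, (∀ y : V, b x y = 0) → x = 0)
    (L : Submodule ℤ V)
    (hfull : Submodule.span ℚ (L : Set V) = ⊤)
    (hint : ∀ x ∈ L, ∀ y ∈ L, ∃ m : ℤ, b x y = m)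
    (heven : ∀ x ∈ L, ∃ m : ℤ, b x x = 2 * m)
    -- unimodularity: `L` equals its dual lattice
    (hunim : ∀ x : V, (∀ y ∈ L, ∃ m : ℤ, b x y = m) → x ∈ L)
    (S : Submodule ℤ V) (hS : S ≤ L)
    -- `S` is primitive in `L`
    (hprim : ∀ x ∈ L, ∀ n : ℤ, n ≠ 0 → n • x ∈ S → x ∈ S)
    -- `S` is nondegenerate
    (hndS : ∀ x ∈ S, (∀ y ∈ S, b x y = 0) → x = 0)
    -- `N = S^⊥` in `L`
    (N : Submodule ℤ V) (hN : ∀ x, x ∈ N ↔ x ∈ L ∧ ∀ y ∈ S, b x y = 0)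
    -- dual lattices `S♯ ⊆ S ⊗ ℚ` and `N♯ ⊆ N ⊗ ℚ`
    (Ss : Submodule ℤ V) (hSs : ∀ x, x ∈ Ss ↔
      x ∈ Submodule.span ℚ (S : Set V) ∧ ∀ y ∈ S, ∃ m : ℤ, b x y = m)
    (Ns : Submodule ℤ V) (hNs : ∀ x, x ∈ Ns ↔
      x ∈ Submodule.span ℚ (N : Set V) ∧ ∀ y ∈ N, ∃ m : ℤ, b x y = m) :
    ∃ φ : (Ss ⧸ S.comap Ss.subtype) ≃+ (Ns ⧸ N.comap Ns.subtype),
      ∀ (x : Ss) (y : Ns),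
        φ (Submodule.Quotient.mk x) = Submodule.Quotient.mk y →
        ∃ m : ℤ, b (y : V) (y : V) + b (x : V) (x : V) = 2 * m := by
  classical
  have hrefl : b.IsRefl := fun x y h => by rw [hsymm]; exact h
  have hndB : LinearMap.BilinForm.Nondegenerate b := hrefl.nondegenerate_iff_separatingLeft.mpr hnd
  -- ## A basis of `V` consisting of vectors of `L`
  obtain ⟨sb, hsbL, hsbspan, hsbli⟩ := exists_linearIndependent ℚ (L : Set V)
  rw [hfull] at hsbspan
  haveI : Fintype ↥sb := hsbli.setFinite.fintype
  let bas : Module.Basis ↥sb ℚ V :=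
    Module.Basis.mk hsbli (by rw [Subtype.range_coe, hsbspan])
  have hbas_apply : ∀ i : ↥sb, bas i = (i : V) := fun i => Module.Basis.mk_apply _ _ i
  have hbasL : ∀ i : ↥sb, bas i ∈ L := fun i => by
    rw [hbas_apply i]; exact hsbL i.2
  -- ## `L` is a finite `ℤ`-module
  set w : Module.Basis ↥sb ℚ V := LinearMap.BilinForm.dualBasis b hndB bas with hw
  have hLle : L ≤ Submodule.span ℤ (Set.range ⇑w) := by
    intro x hx
    have hrepr : ∀ i, ∃ m : ℤ, w.repr x i = (m : ℚ) := by
      intro i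
      obtain ⟨m, hm⟩ := hint x hx (bas i) (hbasL i)
      exact ⟨m, by rw [hw, LinearMap.BilinForm.dualBasis_repr_apply, hm]⟩
    choose c hc using hrepr
    have hxe : x = ∑ i, c i • w i := by
      conv_lhs => rw [← w.sum_repr x]
      refine Finset.sum_congr rfl fun i _ => ?_
      rw [hc i, Int.cast_smul_eq_zsmul]
    rw [hxe]
    exact Submodule.sum_mem _ fun i _ =>
      Submodule.smul_mem _ _ (Submodule.subset_span ⟨i, rfl⟩)
  haveI : Module.Finite ℤ ↥(Submodule.span ℤ (Set.range ⇑w)) :=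
    Module.Finite.span_of_finite ℤ (Set.finite_range _)
  haveI : IsNoetherian ℤ ↥(Submodule.span ℤ (Set.range ⇑w)) :=
    isNoetherian_of_isNoetherianRing_of_finite ℤ _
  haveI hLfin : Module.Finite ℤ ↥L := by
    haveI : Module.Finite ℤ
        ↥(Submodule.comap (Submodule.span ℤ (Set.range ⇑w)).subtype L) :=
      Module.Finite.iff_fg.mpr (IsNoetherian.noetherian _)
    exact Module.Finite.equiv (Submodule.comapSubtypeEquivOfLe hLle)
  -- ## The extension lemma: integral functionals on a primitive sublattice
  -- are realized by vectors of `L`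
  have hext : ∀ W : Submodule ℤ V, W ≤ L →
      (∀ x ∈ L, ∀ n : ℤ, n ≠ 0 → n • x ∈ W → x ∈ W) →
      ∀ ξ : V, (∀ y ∈ W, ∃ m : ℤ, b ξ y = m) →
      ∃ x ∈ L, ∀ y ∈ W, b x y = b ξ y := by
    intro W hWL hWprim ξ hξ
    set W' : Submodule ℤ ↥L := W.comap L.subtype with hW'
    haveI : NoZeroSMulDivisors ℤ (↥L ⧸ W') := by
      refine ⟨fun {n z} h => ?_⟩
      by_cases hn : n = 0
      · exact Or.inl hn
      · right
        obtain ⟨y, rfl⟩ := Submodule.Quotient.mk_surjective W' z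
        rw [← Submodule.Quotient.mk_smul, Submodule.Quotient.mk_eq_zero] at h
        rw [Submodule.Quotient.mk_eq_zero]
        have h2 : (n : ℤ) • (y : V) ∈ W := h
        exact hWprim (y : V) y.2 n hn h2
    haveI : Module.Finite ℤ (↥L ⧸ W') :=
      Module.Finite.of_surjective W'.mkQ (Submodule.Quotient.mk_surjective _)
    haveI : Module.Free ℤ (↥L ⧸ W') := Module.free_of_finite_type_torsion_free'
    obtain ⟨σ, hσ⟩ := Module.projective_lifting_property W'.mkQ LinearMap.id
      (Submodule.Quotient.mk_surjective W')
    set ρ : ↥L →ₗ[ℤ] V := L.subtype - L.subtype.comp (σ.comp W'.mkQ) with hρdef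
    have hρ_apply : ∀ z : ↥L, ρ z = (z : V) - ((σ (W'.mkQ z)) : V) := fun z => rfl
    have hρmem : ∀ z : ↥L, ρ z ∈ W := by
      intro z
      have h0 : W'.mkQ (z - σ (W'.mkQ z)) = 0 := by
        rw [map_sub]
        have h1 : W'.mkQ (σ (W'.mkQ z)) = W'.mkQ z := by
          have := LinearMap.congr_fun hσ (W'.mkQ z)
          simpa using this
        rw [h1, sub_self]
      rw [Submodule.mkQ_apply, Submodule.Quotient.mk_eq_zero] at h0
      have : ((z - σ (W'.mkQ z) : ↥L) : V) ∈ W := h0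
      simpa [hρ_apply] using this
    have hρid : ∀ (z : ↥L), (z : V) ∈ W → ρ z = (z : V) := by
      intro z hz
      have h0 : W'.mkQ z = 0 := by
        rw [Submodule.mkQ_apply, Submodule.Quotient.mk_eq_zero]; exact hz
      rw [hρ_apply, h0, map_zero]
      simp
    set F : ↥L →ₗ[ℤ] ℚ := ((b ξ).restrictScalars ℤ).comp ρ with hF
    have hF_apply : ∀ z : ↥L, F z = b ξ (ρ z) := fun z => rfl
    set G : V →ₗ[ℚ] ℚ := bas.constr ℚ fun i => F ⟨bas i, hbasL i⟩ with hG
    have hGF : ∀ z : ↥L, G (z : V) = F z := by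
      set MB : Submodule ℤ V := Submodule.span ℤ (Set.range ⇑bas) with hMB
      have hMBL : MB ≤ L := Submodule.span_le.mpr (by rintro _ ⟨i, rfl⟩; exact hbasL i)
      have hagree : ∀ v, v ∈ MB → ∀ (hvL : v ∈ L), G v = F ⟨v, hvL⟩ := by
        intro v hv
        induction hv using Submodule.span_induction with
        | mem u hu =>
          intro huL
          obtain ⟨i, rfl⟩ := hu
          exact bas.constr_basis ℚ _ i
        | zero =>
          intro h0
          have : (⟨(0 : V), h0⟩ : ↥L) = 0 := rfl
          rw [this, map_zero, map_zero]
        | add u v hu hv ihu ihv =>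
          intro hL
          have hu' := hMBL hu
          have hv' := hMBL hv
          have : (⟨u + v, hL⟩ : ↥L) = ⟨u, hu'⟩ + ⟨v, hv'⟩ := rfl
          rw [this, map_add, map_add, ihu hu', ihv hv']
        | smul n u hu ihu =>
          intro hL
          have hu' := hMBL hu
          have h1 : (⟨n • u, hL⟩ : ↥L) = n • (⟨u, hu'⟩ : ↥L) := rfl
          rw [h1, map_zsmul, map_zsmul, ihu hu']
      intro z
      have hz : (z : V) ∈ Submodule.span ℚ (MB : Set V) := by
        have htop : Submodule.span ℚ (MB : Set V) = ⊤ := by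
          rw [hMB, Submodule.span_span_of_tower, bas.span_eq]
        rw [htop]; trivial
      obtain ⟨m, hm, hmz⟩ := aux_denom MB hz
      have hmL : (m : ℚ) • (z : V) ∈ L := hMBL hmz
      have h1 : G ((m : ℚ) • (z : V)) = F ⟨(m : ℚ) • (z : V), hmL⟩ := hagree _ hmz hmL
      have h2 : (⟨(m : ℚ) • (z : V), hmL⟩ : ↥L) = m • z := by
        apply Subtype.ext
        simp [Int.cast_smul_eq_zsmul]
      rw [h2, map_smul, map_zsmul] at h1
      have h3 : (m : ℚ) * G (z : V) = (m : ℚ) * F z := by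
        rw [← smul_eq_mul, ← smul_eq_mul, ← Int.cast_smul_eq_zsmul ℚ m (F z)] at *
        simpa using h1
      exact mul_left_cancel₀ (by exact_mod_cast hm) h3
    set x : V := (LinearMap.BilinForm.toDual b hndB).symm G with hx
    have hbx : ∀ v : V, b x v = G v := by
      intro v
      have h1 : LinearMap.BilinForm.toDual b hndB x = G :=
        LinearEquiv.apply_symm_apply _ G
      calc b x v = (LinearMap.BilinForm.toDual b hndB x) v :=
            (LinearMap.BilinForm.toDual_def hndB).symm
        _ = G v := by rw [h1]
    have hxL : x ∈ L := by
      apply hunim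
      intro y hy
      rw [hbx y, hGF ⟨y, hy⟩, hF_apply]
      exact hξ _ (hρmem ⟨y, hy⟩)
    refine ⟨x, hxL, fun y hy => ?_⟩
    rw [hbx y, hGF ⟨y, hWL hy⟩, hF_apply, hρid ⟨y, hWL hy⟩ hy]
  -- ## Orthogonal decomposition of `V`
  set SQ : Submodule ℚ V := Submodule.span ℚ (S : Set V) with hSQdef
  have hSQnd : (LinearMap.BilinForm.restrict b SQ).Nondegenerate := by
    refine (LinearMap.IsRefl.nondegenerate_iff_separatingLeft
      (fun x y h => by simp only [LinearMap.BilinForm.restrict_apply, LinearMap.domRestrict₁₂_apply, LinearMap.domRestrict_apply] at h ⊢; rw [hsymm]; exact h)).mpr ?_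
    intro x hx
    obtain ⟨m, hm, hmx⟩ := aux_denom S x.2
    have h0 : (m : ℚ) • (x : V) = 0 := by
      apply hndS _ hmx
      intro y hy
      have hy' : y ∈ SQ := Submodule.subset_span hy
      have h1 : b (x : V) y = 0 := hx ⟨y, hy'⟩
      rw [map_smul, LinearMap.smul_apply, h1, smul_zero]
    have h2 : (x : V) = 0 := by
      rcases smul_eq_zero.mp h0 with h | h
      · exact absurd h (by exact_mod_cast hm)
      · exact h
    exact Subtype.ext h2
  have hcompl : IsCompl SQ (LinearMap.BilinForm.orthogonal b SQ) :=
    (LinearMap.BilinForm.restrict_nondegenerate_iff_isCompl_orthogonal hrefl).mp hSQnd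
  set OQ : Submodule ℚ V := LinearMap.BilinForm.orthogonal b SQ with hOQdef
  set pS : V →ₗ[ℚ] ↥SQ := SQ.linearProjOfIsCompl OQ hcompl with hpS
  set pO : V →ₗ[ℚ] ↥OQ := OQ.linearProjOfIsCompl SQ hcompl.symm with hpO
  have hdecomp : ∀ v : V, ((pS v : V)) + ((pO v : V)) = v := fun v =>
    Submodule.projection_add_projection_eq_self hcompl v
  have hOrtho : ∀ s ∈ SQ, ∀ o ∈ OQ, b s o = 0 := fun s hs o ho => ho s hs
  have hSperp : ∀ v ∈ OQ, ∀ y ∈ S, b v y = 0 := fun v hv y hy => by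
    rw [hsymm]; exact hv y (Submodule.subset_span hy)
  have hNQ : Submodule.span ℚ (N : Set V) = OQ := by
    apply le_antisymm
    · rw [Submodule.span_le]
      intro v hv
      intro s hs
      -- `s ∈ SQ`, show `b s v = 0`
      have hker : SQ ≤ LinearMap.ker (b.flip v) := by
        rw [hSQdef, Submodule.span_le]
        intro u hu
        rw [SetLike.mem_coe, LinearMap.mem_ker, LinearMap.flip_apply, hsymm]
        exact ((hN v).mp hv).2 u hu
      have := hker hs
      rwa [LinearMap.mem_ker, LinearMap.flip_apply] at this
    · intro v hv
      have hvV : v ∈ Submodule.span ℚ (L : Set V) := by rw [hfull]; trivial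
      obtain ⟨m, hm, hmv⟩ := aux_denom L hvV
      have hmvN : (m : ℚ) • v ∈ N := by
        refine (hN _).mpr ⟨hmv, fun y hy => ?_⟩
        rw [map_smul, LinearMap.smul_apply, hSperp v hv y hy, smul_zero]
      have hveq : v = (m : ℚ)⁻¹ • ((m : ℚ) • v) := by
        rw [smul_smul, inv_mul_cancel₀ (by exact_mod_cast hm), one_smul]
      rw [hveq]
      exact Submodule.smul_mem _ _ (Submodule.subset_span hmvN)
  have hOQnd : (LinearMap.BilinForm.restrict b OQ).Nondegenerate := by
    refine (LinearMap.IsRefl.nondegenerate_iff_separatingLeft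
      (fun x y h => by simp only [LinearMap.BilinForm.restrict_apply, LinearMap.domRestrict₁₂_apply, LinearMap.domRestrict_apply] at h ⊢; rw [hsymm]; exact h)).mpr ?_
    intro x hx
    refine Subtype.ext (hnd _ fun v => ?_)
    have h1 : b (x : V) (pS v : V) = 0 := by
      rw [hsymm]; exact x.2 _ (pS v).2
    have h2 : b (x : V) (pO v : V) = 0 := hx (pO v)
    calc b (x : V) v = b (x : V) ((pS v : V) + (pO v : V)) := by rw [hdecomp v]
      _ = 0 := by rw [map_add, h1, h2, add_zero]
  -- ## Projections of lattice vectors lie in the dual lattices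
  have hpS_mem : ∀ z ∈ L, (pS z : V) ∈ Ss := by
    intro z hz
    rw [hSs]
    refine ⟨(pS z).2, fun y hy => ?_⟩
    have hsplit : b z y = b (pS z : V) y + b (pO z : V) y := by
      conv_lhs => rw [← hdecomp z]
      rw [map_add, LinearMap.add_apply]
    have h1 : b (pS z : V) y = b z y - b (pO z : V) y := by rw [hsplit]; ring
    rw [h1, hSperp _ (pO z).2 y hy, sub_zero]
    exact hint z hz y (hS hy)
  have hpO_mem : ∀ z ∈ L, (pO z : V) ∈ Ns := by
    intro z hz
    rw [hNs]
    refine ⟨by rw [hNQ]; exact (pO z).2, fun y hy => ?_⟩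
    have hyO : y ∈ OQ := by rw [← hNQ]; exact Submodule.subset_span hy
    have hsplit : b z y = b (pS z : V) y + b (pO z : V) y := by
      conv_lhs => rw [← hdecomp z]
      rw [map_add, LinearMap.add_apply]
    have h1 : b (pO z : V) y = b z y - b (pS z : V) y := by rw [hsplit]; ring
    rw [h1, hOrtho _ (pS z).2 y hyO, sub_zero]
    exact hint z hz y ((hN y).mp hy).1
  -- ## The two quotient maps
  set S' : Submodule ℤ ↥Ss := S.comap Ss.subtype with hS'
  set N' : Submodule ℤ ↥Ns := N.comap Ns.subtype with hN'
  set fS : ↥L →ₗ[ℤ] ↥Ss :=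
    LinearMap.codRestrict Ss
      (((SQ.subtype.comp pS).restrictScalars ℤ).comp L.subtype)
      (fun z => hpS_mem (z : V) z.2) with hfS
  set fN : ↥L →ₗ[ℤ] ↥Ns :=
    LinearMap.codRestrict Ns
      (((OQ.subtype.comp pO).restrictScalars ℤ).comp L.subtype)
      (fun z => hpO_mem (z : V) z.2) with hfN
  have hfS_val : ∀ z : ↥L, ((fS z : ↥Ss) : V) = (pS (z : V) : V) := fun z => rfl
  have hfN_val : ∀ z : ↥L, ((fN z : ↥Ns) : V) = (pO (z : V) : V) := fun z => rfl
  set αl : ↥L →ₗ[ℤ] (Ss ⧸ S') := S'.mkQ.comp fS with hαl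
  set βl : ↥L →ₗ[ℤ] (Ns ⧸ N') := N'.mkQ.comp fN with hβl
  have hα_apply : ∀ z : ↥L, αl z = Submodule.Quotient.mk (fS z) := fun z => rfl
  have hβ_apply : ∀ z : ↥L, βl z = Submodule.Quotient.mk (fN z) := fun z => rfl
  -- ## Strong surjectivity on the `S` side
  have hsurjS : ∀ ξ : ↥Ss, ∃ z : ↥L, (pS (z : V) : V) = (ξ : V) := by
    intro ξ
    have hmem := (hSs (ξ : V)).mp ξ.2
    obtain ⟨x, hxL, hx⟩ := hext S hS hprim (ξ : V) hmem.2
    refine ⟨⟨x, hxL⟩, ?_⟩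
    have hdS : (pS x : V) - (ξ : V) ∈ SQ := sub_mem (pS x).2 hmem.1
    have hker : ∀ y ∈ S, b ((pS x : V) - (ξ : V)) y = 0 := by
      intro y hy
      have h1 : b (pS x : V) y = b x y := by
        conv_rhs => rw [← hdecomp x]
        rw [map_add, LinearMap.add_apply, hSperp _ (pO x).2 y hy, add_zero]
      rw [map_sub, LinearMap.sub_apply, h1, hx y hy, sub_self]
    have hker' : ∀ y : ↥SQ, b ((pS x : V) - (ξ : V)) (y : V) = 0 := by
      intro y
      have hle : Submodule.span ℚ (S : Set V) ≤ LinearMap.ker (b ((pS x : V) - (ξ : V))) :=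
        Submodule.span_le.mpr fun u hu => LinearMap.mem_ker.mpr (hker u hu)
      exact hle y.2
    have h0 : (⟨(pS x : V) - (ξ : V), hdS⟩ : ↥SQ) = 0 :=
      hSQnd.1 ⟨_, hdS⟩ (fun n => hker' n)
    have h1 : (pS x : V) - (ξ : V) = 0 := congrArg Subtype.val h0
    exact sub_eq_zero.mp h1
  -- ## Strong surjectivity on the `N` side
  have hNL : N ≤ L := fun x hx => ((hN x).mp hx).1
  have hprimN : ∀ x ∈ L, ∀ n : ℤ, n ≠ 0 → n • x ∈ N → x ∈ N := by
    intro x hxL n hn hnx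
    refine (hN x).mpr ⟨hxL, fun y hy => ?_⟩
    have h1 := ((hN _).mp hnx).2 y hy
    have hcast : b ((n : ℚ) • x) y = 0 := by
      rw [Int.cast_smul_eq_zsmul]; exact h1
    rw [map_smul, LinearMap.smul_apply, smul_eq_mul] at hcast
    exact (mul_eq_zero.mp hcast).resolve_left (by exact_mod_cast hn)
  have hsurjN : ∀ η : ↥Ns, ∃ z : ↥L, (pO (z : V) : V) = (η : V) := by
    intro η
    have hmem := (hNs (η : V)).mp η.2
    obtain ⟨x, hxL, hx⟩ := hext N hNL hprimN (η : V) hmem.2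
    refine ⟨⟨x, hxL⟩, ?_⟩
    have hηO : (η : V) ∈ OQ := by rw [← hNQ]; exact hmem.1
    have hdO : (pO x : V) - (η : V) ∈ OQ := sub_mem (pO x).2 hηO
    have hker : ∀ y ∈ N, b ((pO x : V) - (η : V)) y = 0 := by
      intro y hy
      have hyO : y ∈ OQ := by rw [← hNQ]; exact Submodule.subset_span hy
      have h1 : b (pO x : V) y = b x y := by
        conv_rhs => rw [← hdecomp x]
        rw [map_add, LinearMap.add_apply, hOrtho _ (pS x).2 y hyO, zero_add]
      rw [map_sub, LinearMap.sub_apply, h1, hx y hy, sub_self]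
    have hker' : ∀ y : ↥OQ, b ((pO x : V) - (η : V)) (y : V) = 0 := by
      intro y
      have hle : Submodule.span ℚ (N : Set V) ≤ LinearMap.ker (b ((pO x : V) - (η : V))) :=
        Submodule.span_le.mpr fun u hu => LinearMap.mem_ker.mpr (hker u hu)
      exact (hNQ.symm.trans_le hle) y.2
    have h0 : (⟨(pO x : V) - (η : V), hdO⟩ : ↥OQ) = 0 :=
      hOQnd.1 ⟨_, hdO⟩ (fun n => hker' n)
    have h1 : (pO x : V) - (η : V) = 0 := congrArg Subtype.val h0
    exact sub_eq_zero.mp h1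
  have hα_eq : ∀ (z : ↥L) (ξ : ↥Ss), (pS (z : V) : V) = (ξ : V) →
      αl z = Submodule.Quotient.mk ξ := by
    intro z ξ hz
    have h1 : fS z = ξ := Subtype.ext (by rw [hfS_val z]; exact hz)
    rw [hα_apply, h1]
  have hβ_eq : ∀ (z : ↥L) (η : ↥Ns), (pO (z : V) : V) = (η : V) →
      βl z = Submodule.Quotient.mk η := by
    intro z η hz
    have h1 : fN z = η := Subtype.ext (by rw [hfN_val z]; exact hz)
    rw [hβ_apply, h1]
  have hαs : Function.Surjective αl := by
    intro q
    obtain ⟨ξ, rfl⟩ := Submodule.Quotient.mk_surjective S' q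
    obtain ⟨z, hz⟩ := hsurjS ξ
    exact ⟨z, hα_eq z ξ hz⟩
  have hβs : Function.Surjective βl := by
    intro q
    obtain ⟨η, rfl⟩ := Submodule.Quotient.mk_surjective N' q
    obtain ⟨z, hz⟩ := hsurjN η
    exact ⟨z, hβ_eq z η hz⟩
  -- ## Kernels agree
  have hkereq : LinearMap.ker αl = LinearMap.ker βl := by
    ext z
    simp only [LinearMap.mem_ker]
    have hαz : (αl z = 0) ↔ (pS (z : V) : V) ∈ S := by
      rw [hα_apply, Submodule.Quotient.mk_eq_zero, hS', Submodule.mem_comap,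
        Submodule.subtype_apply, hfS_val z]
    have hβz : (βl z = 0) ↔ (pO (z : V) : V) ∈ N := by
      rw [hβ_apply, Submodule.Quotient.mk_eq_zero, hN', Submodule.mem_comap,
        Submodule.subtype_apply, hfN_val z]
    rw [hαz, hβz]
    constructor
    · intro hSmem
      refine (hN _).mpr ⟨?_, fun y hy => hSperp _ (pO (z : V)).2 y hy⟩
      have h1 : (pO (z : V) : V) = (z : V) - (pS (z : V) : V) :=
        eq_sub_of_add_eq' (hdecomp (z : V))
      rw [h1]
      exact Submodule.sub_mem L z.2 (hS hSmem)
    · intro hNmem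
      have hpSL : (pS (z : V) : V) ∈ L := by
        have h1 : (pS (z : V) : V) = (z : V) - (pO (z : V) : V) :=
          eq_sub_of_add_eq (hdecomp (z : V))
        rw [h1]
        exact Submodule.sub_mem L z.2 (hNL hNmem)
      obtain ⟨m, hm, hmx⟩ := aux_denom S (pS (z : V)).2
      have h2 : m • (pS (z : V) : V) ∈ S := by
        rwa [← Int.cast_smul_eq_zsmul ℚ]
      exact hprim _ hpSL m hm h2
  -- ## Assemble the equivalence
  set eα := αl.quotKerEquivOfSurjective hαs with heαdef
  set eβ := βl.quotKerEquivOfSurjective hβs with heβdef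
  set emid := Submodule.quotEquivOfEq _ _ hkereq with hemiddef
  set φl := (eα.symm.trans emid).trans eβ with hφldef
  have heα : ∀ z : ↥L, eα (Submodule.Quotient.mk z) = αl z := fun z => rfl
  have heβ : ∀ z : ↥L, eβ (Submodule.Quotient.mk z) = βl z := fun z => rfl
  have hφβ : ∀ z : ↥L, φl (αl z) = βl z := by
    intro z
    have h1 : eα.symm (αl z) = Submodule.Quotient.mk z := by
      rw [← heα z, LinearEquiv.symm_apply_apply]
    show eβ (emid (eα.symm (αl z))) = βl z
    rw [h1, hemiddef, Submodule.quotEquivOfEq_mk, heβ z]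
  refine ⟨φl.toAddEquiv, ?_⟩
  intro x y hxy
  obtain ⟨z, hz⟩ := hsurjS x
  have hαz : αl z = Submodule.Quotient.mk x := hα_eq z x hz
  have hβz : (Submodule.Quotient.mk (fN z) : Ns ⧸ N') = Submodule.Quotient.mk y := by
    calc (Submodule.Quotient.mk (fN z) : Ns ⧸ N') = βl z := (hβ_apply z).symm
      _ = φl (αl z) := (hφβ z).symm
      _ = φl (Submodule.Quotient.mk x) := by rw [hαz]
      _ = Submodule.Quotient.mk y := hxy
  have hvN : (y : V) - (pO (z : V) : V) ∈ N := by
    have h1 : fN z - y ∈ N' := (Submodule.Quotient.eq N').mp hβz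
    rw [hN', Submodule.mem_comap, Submodule.subtype_apply] at h1
    have h3 : ((fN z : ↥Ns) : V) - (y : V) ∈ N := by
      rwa [AddSubgroupClass.coe_sub] at h1
    rw [hfN_val z] at h3
    have := N.neg_mem h3
    rwa [neg_sub] at this
  set v : V := (y : V) - (pO (z : V) : V) with hv
  have hyval : (y : V) = (pO (z : V) : V) + v := by rw [hv]; abel
  have hxval : (x : V) = (pS (z : V) : V) := hz.symm
  obtain ⟨m1, hm1⟩ := heven (z : V) z.2
  obtain ⟨m2, hm2⟩ := heven v (hNL hvN)
  obtain ⟨k, hk⟩ := ((hNs _).mp (hpO_mem (z : V) z.2)).2 v hvN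
  have h0 : b (pS (z : V) : V) (pO (z : V) : V) = 0 :=
    (pO (z : V)).2 _ (pS (z : V)).2
  have h0' : b (pO (z : V) : V) (pS (z : V) : V) = 0 := by rw [hsymm]; exact h0
  have hvpO : b v (pO (z : V) : V) = k := by rw [hsymm]; exact hk
  have hzz : b (z : V) (z : V)
      = b (pS (z : V) : V) (pS (z : V) : V) + b (pO (z : V) : V) (pO (z : V) : V) := by
    conv_lhs => rw [← hdecomp (z : V)]
    simp only [map_add, LinearMap.add_apply, h0, h0', add_zero, zero_add]
  have hyy : b (y : V) (y : V)
      = b (pO (z : V) : V) (pO (z : V) : V) + 2 * (k : ℚ) + b v v := by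
    rw [hyval]
    simp only [map_add, LinearMap.add_apply]
    rw [hk, hvpO]
    ring
  refine ⟨m1 + k + m2, ?_⟩
  have hxx : b (x : V) (x : V) = b (pS (z : V) : V) (pS (z : V) : V) := by rw [hxval]
  push_cast
  linarith [hm1, hm2, hzz, hyy, hxx]
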